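/- For all (r, θ) with r² + a²cos²θ > 0, the gradient invariant I₇ of the Kerr–(anti-)de Sitter black hole satisfies the closed-form identity I₇(r, θ) = −(27648 m⁴ r cosθ a/(r² + a²c²)¹⁵)·(7a⁶c⁶ − 35a⁴c⁴r² + 21a²c²r⁴ − r⁶)·(a⁶c⁶ − 21a⁴c⁴r² + 35a²c²r⁴ − 7r⁶)·E(r, θ), where c = cosθ; in particular I₇ vanishes on the boundary of the ergosphere region E(r, θ) = 0. -/

import Mathlib

noncomputable section

namespace KerrAdS

/-- `ρ² = r² + a² cos²θ` in Boyer–Lindquist coordinates. -/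
def rho2 (a r θ : ℝ) : ℝ := r ^ 2 + a ^ 2 * Real.cos θ ^ 2

/-- The complex combination `I₁ + i I₂ = 48 m² (r − i a cos θ)⁶ / ρ¹²`
(the orientation convention `I₁ + iI₂ = 48 Ψ₂²` with `Ψ₂ = −m/(r + i a cos θ)³`). -/
def Ic (a m r θ : ℝ) : ℂ :=
  48 * (m : ℂ) ^ 2 * ((r : ℂ) - Complex.I * ((a * Real.cos θ : ℝ) : ℂ)) ^ 6 /
    ((rho2 a r θ : ℝ) : ℂ) ^ 6

/-- The Weyl invariant `I₁ = C_{αβγδ} C^{αβγδ}` of the Kerr–(anti-)de Sitter black hole. -/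
def I1 (a m r θ : ℝ) : ℝ := (Ic a m r θ).re

/-- The Chern–Pontryagin invariant `I₂ = C*_{αβγδ} C^{αβγδ}`. -/
def I2 (a m r θ : ℝ) : ℝ := (Ic a m r θ).im

/-- `Δ_r = (1 − Λr²/3)(r² + a²) − 2mr`. -/
def Δr (a m Λ r : ℝ) : ℝ := (1 - Λ * r ^ 2 / 3) * (r ^ 2 + a ^ 2) - 2 * m * r

/-- `Δ_θ = 1 + (a²Λ/3) cos²θ`. -/
def Δθ (a Λ θ : ℝ) : ℝ := 1 + a ^ 2 * Λ / 3 * Real.cos θ ^ 2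

/-- The gradient invariant `I₅ = ∇_μ I₁ ∇^μ I₁
  = (Δ_r/ρ²)(∂_r I₁)² + (Δ_θ/ρ²)(∂_θ I₁)²`. -/
def I5 (a m Λ r θ : ℝ) : ℝ :=
  Δr a m Λ r / rho2 a r θ * (deriv (fun r' => I1 a m r' θ) r) ^ 2 +
    Δθ a Λ θ / rho2 a r θ * (deriv (fun θ' => I1 a m r θ') θ) ^ 2

/-- The gradient invariant `I₆ = ∇_μ I₂ ∇^μ I₂
  = (Δ_r/ρ²)(∂_r I₂)² + (Δ_θ/ρ²)(∂_θ I₂)²`. -/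
def I6 (a m Λ r θ : ℝ) : ℝ :=
  Δr a m Λ r / rho2 a r θ * (deriv (fun r' => I2 a m r' θ) r) ^ 2 +
    Δθ a Λ θ / rho2 a r θ * (deriv (fun θ' => I2 a m r θ') θ) ^ 2

/-- The gradient invariant `I₇ = ∇_μ I₁ ∇^μ I₂
  = (Δ_r/ρ²)(∂_r I₁)(∂_r I₂) + (Δ_θ/ρ²)(∂_θ I₁)(∂_θ I₂)`. -/
def I7 (a m Λ r θ : ℝ) : ℝ :=
  Δr a m Λ r / rho2 a r θ *
      (deriv (fun r' => I1 a m r' θ) r) * (deriv (fun r' => I2 a m r' θ) r) +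
    Δθ a Λ θ / rho2 a r θ *
      (deriv (fun θ' => I1 a m r θ') θ) * (deriv (fun θ' => I2 a m r θ') θ)

/-- The ergosurface polynomial
`E = Λa⁴c⁴ − Λa⁴c² − Λa²r² − Λr⁴ + 3a²c² − 6mr + 3r²`, `c = cos θ`. -/
def E (a m Λ r θ : ℝ) : ℝ :=
  Λ * a ^ 4 * Real.cos θ ^ 4 - Λ * a ^ 4 * Real.cos θ ^ 2 - Λ * a ^ 2 * r ^ 2 - Λ * r ^ 4 +
    3 * a ^ 2 * Real.cos θ ^ 2 - 6 * m * r + 3 * r ^ 2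

/-- The differential Weyl invariant `I₃ = ∇_μ C_{αβγδ} ∇^μ C^{αβγδ}`
(explicit closed form). -/
def I3 (a m Λ r θ : ℝ) : ℝ :=
  240 * m ^ 2 / rho2 a r θ ^ 9 *
    (a ^ 4 * Real.cos θ ^ 4 - 4 * a ^ 3 * Real.cos θ ^ 3 * r
      - 6 * a ^ 2 * Real.cos θ ^ 2 * r ^ 2 + 4 * a * Real.cos θ * r ^ 3 + r ^ 4) *
    (a ^ 4 * Real.cos θ ^ 4 + 4 * a ^ 3 * Real.cos θ ^ 3 * r
      - 6 * a ^ 2 * Real.cos θ ^ 2 * r ^ 2 - 4 * a * Real.cos θ * r ^ 3 + r ^ 4) *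
    E a m Λ r θ

/-- The mixed differential Weyl invariant `I₄ = ∇_μ C_{αβγδ} ∇^μ C*^{αβγδ}`
(explicit closed form). -/
def I4 (a m Λ r θ : ℝ) : ℝ :=
  1920 * a * Real.cos θ * r * m ^ 2 / rho2 a r θ ^ 9 * E a m Λ r θ *
    (a ^ 2 * Real.cos θ ^ 2 - 2 * a * Real.cos θ * r - r ^ 2) *
    (a ^ 2 * Real.cos θ ^ 2 + 2 * a * Real.cos θ * r - r ^ 2) *
    (a ^ 2 * Real.cos θ ^ 2 - r ^ 2)

end KerrAdS

namespace KerrAdS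

lemma hw (r b : ℝ) : ((r : ℂ) - Complex.I * (b : ℂ)) ^ 6 =
    ((r^6 - 15*r^4*b^2 + 15*r^2*b^4 - b^6 : ℝ) : ℂ)
      + ((-6*b*r^5 + 20*b^3*r^3 - 6*b^5*r : ℝ) : ℂ) * Complex.I := by
  apply Complex.ext <;>
    simp [pow_succ, Complex.mul_re, Complex.mul_im] <;> ring

lemma Ic_eq (a m r θ : ℝ) :
    Ic a m r θ =
      ((48*m^2*(r^6 - 15*r^4*(a*Real.cos θ)^2 + 15*r^2*(a*Real.cos θ)^4
          - (a*Real.cos θ)^6) / (rho2 a r θ)^6 : ℝ) : ℂ)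
      + ((48*m^2*(-6*(a*Real.cos θ)*r^5 + 20*(a*Real.cos θ)^3*r^3
          - 6*(a*Real.cos θ)^5*r) / (rho2 a r θ)^6 : ℝ) : ℂ) * Complex.I := by
  rw [Ic, hw]
  push_cast
  ring

lemma I1_eq (a m r θ : ℝ) :
    I1 a m r θ = 48*m^2*(r^6 - 15*r^4*(a*Real.cos θ)^2 + 15*r^2*(a*Real.cos θ)^4
      - (a*Real.cos θ)^6) / (rho2 a r θ)^6 := by
  rw [I1, Ic_eq]
  simp only [Complex.add_re, Complex.ofReal_re, Complex.mul_re, Complex.ofReal_im,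
    Complex.I_re, Complex.I_im]
  ring

lemma I2_eq (a m r θ : ℝ) :
    I2 a m r θ = 48*m^2*(-6*(a*Real.cos θ)*r^5 + 20*(a*Real.cos θ)^3*r^3
      - 6*(a*Real.cos θ)^5*r) / (rho2 a r θ)^6 := by
  rw [I2, Ic_eq]
  simp only [Complex.add_im, Complex.ofReal_im, Complex.mul_im, Complex.ofReal_re,
    Complex.I_re, Complex.I_im]
  ring

lemma deriv_I1_r (a m θ r : ℝ) (h : rho2 a r θ ≠ 0) :
    deriv (fun r' => I1 a m r' θ) r =
      -288*m^2*r*(r^6 - 21*r^4*(a*Real.cos θ)^2 + 35*r^2*(a*Real.cos θ)^4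
        - 7*(a*Real.cos θ)^6) / (rho2 a r θ)^7 := by
  set b := a * Real.cos θ with hb
  have hu : r ^ 2 + b ^ 2 ≠ 0 := by
    rw [rho2] at h; rw [hb, mul_pow]; exact h
  have hfun : (fun r' => I1 a m r' θ)
      = fun x => 48*m^2 * ((x^6 - 15*b^2*x^4 + 15*b^4*x^2 - b^6) / (x^2 + b^2)^6) := by
    funext x; rw [I1_eq, rho2, hb]; ring
  have hnum : HasDerivAt (fun x : ℝ => x^6 - 15*b^2*x^4 + 15*b^4*x^2 - b^6)
      ((6:ℕ)*r^5 - 15*b^2*((4:ℕ)*r^3) + 15*b^4*((2:ℕ)*r^1)) r := by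
    exact (((hasDerivAt_pow 6 r).sub (((hasDerivAt_pow 4 r).const_mul (15*b^2)))).add
      ((hasDerivAt_pow 2 r).const_mul (15*b^4))).sub_const (b^6)
  have hin : HasDerivAt (fun x : ℝ => x^2 + b^2) ((2:ℕ)*r^1) r :=
    (hasDerivAt_pow 2 r).add_const _
  have hden := hin.pow 6
  have hd6 : ((r^2 + b^2)^6 : ℝ) ≠ 0 := pow_ne_zero _ hu
  have H := ((hnum.div hden hd6).const_mul (48*m^2 : ℝ))
  simp only [Pi.div_def, Pi.pow_def] at H
  have hρ : rho2 a r θ = r^2 + b^2 := by rw [rho2, hb, mul_pow]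
  rw [hfun, H.deriv, hρ]
  field_simp
  ring

lemma deriv_I2_r (a m θ r : ℝ) (h : rho2 a r θ ≠ 0) :
    deriv (fun r' => I2 a m r' θ) r =
      -288*m^2*(a*Real.cos θ)*((a*Real.cos θ)^6 - 21*(a*Real.cos θ)^4*r^2
        + 35*(a*Real.cos θ)^2*r^4 - 7*r^6) / (rho2 a r θ)^7 := by
  set b := a * Real.cos θ with hb
  have hu : r ^ 2 + b ^ 2 ≠ 0 := by
    rw [rho2] at h; rw [hb, mul_pow]; exact h
  have hfun : (fun r' => I2 a m r' θ)
      = fun x => 48*m^2 * ((-(6*b)*x^5 + 20*b^3*x^3 - 6*b^5*x^1) / (x^2 + b^2)^6) := by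
    funext x; rw [I2_eq, rho2, hb]; ring
  have hnum : HasDerivAt (fun x : ℝ => -(6*b)*x^5 + 20*b^3*x^3 - 6*b^5*x^1)
      (-(6*b)*((5:ℕ)*r^4) + 20*b^3*((3:ℕ)*r^2) - 6*b^5*((1:ℕ)*r^0)) r := by
    exact (((hasDerivAt_pow 5 r).const_mul (-(6*b))).add
      ((hasDerivAt_pow 3 r).const_mul (20*b^3))).sub ((hasDerivAt_pow 1 r).const_mul (6*b^5))
  have hin : HasDerivAt (fun x : ℝ => x^2 + b^2) ((2:ℕ)*r^1) r :=
    (hasDerivAt_pow 2 r).add_const _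
  have hden := hin.pow 6
  have hd6 : ((r^2 + b^2)^6 : ℝ) ≠ 0 := pow_ne_zero _ hu
  have H := ((hnum.div hden hd6).const_mul (48*m^2 : ℝ))
  simp only [Pi.div_def, Pi.pow_def] at H
  have hρ : rho2 a r θ = r^2 + b^2 := by rw [rho2, hb, mul_pow]
  rw [hfun, H.deriv, hρ]
  field_simp
  ring

lemma deriv_I1_θ (a m r θ : ℝ) (h : rho2 a r θ ≠ 0) :
    deriv (fun θ' => I1 a m r θ') θ =
      (a*Real.sin θ) * (-(288*m^2*(a*Real.cos θ)*((a*Real.cos θ)^6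
        - 21*(a*Real.cos θ)^4*r^2 + 35*(a*Real.cos θ)^2*r^4 - 7*r^6)) / (rho2 a r θ)^7) := by
  set c := Real.cos θ with hc
  have hu : r ^ 2 + a ^ 2 * c ^ 2 ≠ 0 := by rw [rho2] at h; exact h
  have hfun : (fun θ' => I1 a m r θ')
      = (fun y => 48*m^2 * ((r^6 - 15*r^4*(a*y)^2 + 15*r^2*(a*y)^4 - (a*y)^6)
          / (r^2 + a^2*y^2)^6)) ∘ Real.cos := by
    funext x; simp only [Function.comp_apply]; rw [I1_eq, rho2]; ring
  have hac : HasDerivAt (fun y : ℝ => a*y) a c := by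
    simpa using (hasDerivAt_id c).const_mul a
  have hnum : HasDerivAt (fun y : ℝ => r^6 - 15*r^4*(a*y)^2 + 15*r^2*(a*y)^4 - (a*y)^6)
      (0 - 15*r^4*((2:ℕ)*(a*c)^1*a) + 15*r^2*((4:ℕ)*(a*c)^3*a) - (6:ℕ)*(a*c)^5*a) c := by
    exact (((hasDerivAt_const c (r^6)).sub ((hac.pow 2).const_mul (15*r^4))).add
      ((hac.pow 4).const_mul (15*r^2))).sub (hac.pow 6)
  have hin : HasDerivAt (fun y : ℝ => r^2 + a^2*y^2) (a^2*((2:ℕ)*c^1)) c :=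
    ((hasDerivAt_pow 2 c).const_mul (a^2)).const_add (r^2)
  have hden := hin.pow 6
  have hd6 : ((r^2 + a^2*c^2)^6 : ℝ) ≠ 0 := pow_ne_zero _ hu
  have HG := ((hnum.div hden hd6).const_mul (48*m^2 : ℝ))
  have hcos : HasDerivAt Real.cos (-Real.sin θ) θ := Real.hasDerivAt_cos θ
  have H := HG.comp θ hcos
  simp only [Pi.div_def, Pi.pow_def] at H
  rw [hfun, H.deriv, rho2]
  rw [← hc]
  field_simp
  ring

lemma deriv_I2_θ (a m r θ : ℝ) (h : rho2 a r θ ≠ 0) :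
    deriv (fun θ' => I2 a m r θ') θ =
      (a*Real.sin θ) * (288*m^2*r*(r^6 - 21*r^4*(a*Real.cos θ)^2
        + 35*r^2*(a*Real.cos θ)^4 - 7*(a*Real.cos θ)^6) / (rho2 a r θ)^7) := by
  set c := Real.cos θ with hc
  have hu : r ^ 2 + a ^ 2 * c ^ 2 ≠ 0 := by rw [rho2] at h; exact h
  have hfun : (fun θ' => I2 a m r θ')
      = (fun y => 48*m^2 * ((-(6*r^5)*(a*y)^1 + 20*r^3*(a*y)^3 - 6*r*(a*y)^5)
          / (r^2 + a^2*y^2)^6)) ∘ Real.cos := by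
    funext x; simp only [Function.comp_apply]; rw [I2_eq, rho2]; ring
  have hac : HasDerivAt (fun y : ℝ => a*y) a c := by
    simpa using (hasDerivAt_id c).const_mul a
  have hnum : HasDerivAt (fun y : ℝ => -(6*r^5)*(a*y)^1 + 20*r^3*(a*y)^3 - 6*r*(a*y)^5)
      (-(6*r^5)*((1:ℕ)*(a*c)^0*a) + 20*r^3*((3:ℕ)*(a*c)^2*a) - 6*r*((5:ℕ)*(a*c)^4*a)) c := by
    exact (((hac.pow 1).const_mul (-(6*r^5))).add
      ((hac.pow 3).const_mul (20*r^3))).sub ((hac.pow 5).const_mul (6*r))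
  have hin : HasDerivAt (fun y : ℝ => r^2 + a^2*y^2) (a^2*((2:ℕ)*c^1)) c :=
    ((hasDerivAt_pow 2 c).const_mul (a^2)).const_add (r^2)
  have hden := hin.pow 6
  have hd6 : ((r^2 + a^2*c^2)^6 : ℝ) ≠ 0 := pow_ne_zero _ hu
  have HG := ((hnum.div hden hd6).const_mul (48*m^2 : ℝ))
  have hcos : HasDerivAt Real.cos (-Real.sin θ) θ := Real.hasDerivAt_cos θ
  have H := HG.comp θ hcos
  simp only [Pi.div_def, Pi.pow_def] at H
  rw [hfun, H.deriv, rho2]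
  rw [← hc]
  field_simp
  ring


/-- For all `(r, θ)` with `ρ² > 0`, the gradient invariant `I₇` of the
Kerr–(anti-)de Sitter black hole has the stated closed form; in particular `I₇` vanishes
on the boundary of the ergosphere region `E = 0`. -/
theorem I7_closed_form (a m Λ : ℝ) :
    ∀ r θ : ℝ, 0 < rho2 a r θ →
      I7 a m Λ r θ =
        -(27648 * m ^ 4 * r * Real.cos θ * a / rho2 a r θ ^ 15) *
          (7 * a ^ 6 * Real.cos θ ^ 6 - 35 * a ^ 4 * Real.cos θ ^ 4 * r ^ 2
            + 21 * a ^ 2 * Real.cos θ ^ 2 * r ^ 4 - r ^ 6) *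
          (a ^ 6 * Real.cos θ ^ 6 - 21 * a ^ 4 * Real.cos θ ^ 4 * r ^ 2
            + 35 * a ^ 2 * Real.cos θ ^ 2 * r ^ 4 - 7 * r ^ 6) *
          E a m Λ r θ ∧
      (E a m Λ r θ = 0 → I7 a m Λ r θ = 0) := by
  intro r θ h
  have hρ : rho2 a r θ ≠ 0 := ne_of_gt h
  have hmain : I7 a m Λ r θ =
      -(27648 * m ^ 4 * r * Real.cos θ * a / rho2 a r θ ^ 15) *
        (7 * a ^ 6 * Real.cos θ ^ 6 - 35 * a ^ 4 * Real.cos θ ^ 4 * r ^ 2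
          + 21 * a ^ 2 * Real.cos θ ^ 2 * r ^ 4 - r ^ 6) *
        (a ^ 6 * Real.cos θ ^ 6 - 21 * a ^ 4 * Real.cos θ ^ 4 * r ^ 2
          + 35 * a ^ 2 * Real.cos θ ^ 2 * r ^ 4 - 7 * r ^ 6) *
        E a m Λ r θ := by
    have key : ∀ W1 W2 : ℝ,
        Δθ a Λ θ / rho2 a r θ * (a * Real.sin θ * W1) * (a * Real.sin θ * W2)
          = Δθ a Λ θ / rho2 a r θ * (a ^ 2 * (1 - Real.cos θ ^ 2)) * (W1 * W2) := by
      intro W1 W2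
      have hs : Real.sin θ ^ 2 = 1 - Real.cos θ ^ 2 := Real.sin_sq θ
      calc Δθ a Λ θ / rho2 a r θ * (a * Real.sin θ * W1) * (a * Real.sin θ * W2)
          = Real.sin θ ^ 2 * (Δθ a Λ θ / rho2 a r θ * a ^ 2 * (W1 * W2)) := by ring
        _ = _ := by rw [hs]; ring
    have hE3 : E a m Λ r θ
        = 3 * (Δr a m Λ r - a ^ 2 * (1 - Real.cos θ ^ 2) * Δθ a Λ θ) := by
      rw [E, Δr, Δθ]; ring
    rw [I7, deriv_I1_r a m θ r hρ, deriv_I2_r a m θ r hρ,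
      deriv_I1_θ a m r θ hρ, deriv_I2_θ a m r θ hρ, key, hE3]
    field_simp
    ring
  exact ⟨hmain, fun hE0 => by rw [hmain, hE0]; ring⟩


end KerrAdS
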